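/- In an AUAI approximation system, if the K_i are pairwise disjoint, then (X ∩ Y)^{l1} = X^{l1} ∩ Y^{l1} and (X ∪ Y)^{u2} = X^{u2} ∪ Y^{u2} for all X, Y ⊆ S. -/
import Mathlib


open Set

/-- AU-lower approximation: union of all cover elements included in `X`. -/
def AUlower {α : Type*} {n : ℕ} (K : Fin (n + 2) → Set α) (X : Set α) : Set α :=
  ⋃₀ {A | ∃ i : Fin (n + 2), A = K i ∧ K i ⊆ X}

/-- AU-upper approximation: intersection of all unions of cover elements covering `X`. -/
def AUupper {α : Type*} {n : ℕ} (K : Fin (n + 2) → Set α) (X : Set α) : Set α :=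
  ⋂₀ {A | ∃ I : Set (Fin (n + 2)), A = (⋃ i ∈ I, K i) ∧ X ⊆ A}

/-- AI-lower approximation: union of all intersections of complements included in `X`. -/
def AIlower {α : Type*} {n : ℕ} (K : Fin (n + 2) → Set α) (X : Set α) : Set α :=
  ⋃₀ {A | ∃ I : Set (Fin (n + 2)), A = (⋂ i ∈ I, (K i)ᶜ) ∧ A ⊆ X}

/-- AI-upper approximation: intersection of all complements of cover elements containing `X`. -/
def AIupper {α : Type*} {n : ℕ} (K : Fin (n + 2) → Set α) (X : Set α) : Set α :=
  ⋂₀ {A | ∃ i : Fin (n + 2), A = (K i)ᶜ ∧ X ⊆ (K i)ᶜ}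

theorem stmt6 {α : Type*} {n : ℕ} (K : Fin (n + 2) → Set α)
    (hK0 : K 0 = ∅) (hKtop : K (Fin.last (n + 1)) = Set.univ)
    (hdisj : ∀ i j : Fin (n + 2), i ≠ 0 → i ≠ Fin.last (n + 1) →
      j ≠ 0 → j ≠ Fin.last (n + 1) → i ≠ j → K i ∩ K j = ∅)
    (X Y : Set α) :
    AUlower K (X ∩ Y) = AUlower K X ∩ AUlower K Y ∧
      AIupper K (X ∪ Y) = AIupper K X ∪ AIupper K Y := by
  constructor
  · ext x
    simp only [AUlower, mem_sUnion, mem_setOf_eq, mem_inter_iff]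
    constructor
    · rintro ⟨A, ⟨i, rfl, hi⟩, hx⟩
      exact ⟨⟨K i, ⟨i, rfl, hi.trans inter_subset_left⟩, hx⟩,
             ⟨K i, ⟨i, rfl, hi.trans inter_subset_right⟩, hx⟩⟩
    · rintro ⟨⟨A, ⟨i, rfl, hi⟩, hxi⟩, ⟨B, ⟨j, rfl, hj⟩, hxj⟩⟩
      by_cases hij : i = j
      · subst hij; exact ⟨K i, ⟨i, rfl, subset_inter hi hj⟩, hxi⟩
      have hi0 : i ≠ 0 := by rintro rfl; rw [hK0] at hxi; exact hxi
      have hj0 : j ≠ 0 := by rintro rfl; rw [hK0] at hxj; exact hxj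
      by_cases hil : i = Fin.last (n + 1)
      · subst hil
        exact ⟨K j, ⟨j, rfl, subset_inter (fun y hy => hi (by rw [hKtop]; trivial)) hj⟩, hxj⟩
      by_cases hjl : j = Fin.last (n + 1)
      · subst hjl
        exact ⟨K i, ⟨i, rfl, subset_inter hi (fun y hy => hj (by rw [hKtop]; trivial))⟩, hxi⟩
      have := hdisj i j hi0 hil hj0 hjl hij
      exact absurd (show x ∈ K i ∩ K j from ⟨hxi, hxj⟩) (by rw [this]; exact notMem_empty x)
  · ext x
    simp only [AIupper, mem_sInter, mem_setOf_eq, mem_union]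
    constructor
    · intro h
      by_contra hc
      push_neg at hc
      obtain ⟨⟨A, ⟨i, rfl, hi⟩, hxi⟩, ⟨B, ⟨j, rfl, hj⟩, hxj⟩⟩ := hc
      rw [mem_compl_iff, not_not] at hxi hxj
      by_cases hij : i = j
      · subst hij
        exact (h _ ⟨i, rfl, union_subset hi hj⟩) hxi
      have hi0 : i ≠ 0 := by rintro rfl; rw [hK0] at hxi; exact hxi
      have hj0 : j ≠ 0 := by rintro rfl; rw [hK0] at hxj; exact hxj
      by_cases hil : i = Fin.last (n + 1)
      · subst hil
        have hX : X ⊆ ∅ := by rw [← compl_univ, ← hKtop]; exact hi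
        exact (h _ ⟨j, rfl, union_subset (fun y hy => absurd (hX hy) (notMem_empty y)) hj⟩) hxj
      by_cases hjl : j = Fin.last (n + 1)
      · subst hjl
        have hY : Y ⊆ ∅ := by rw [← compl_univ, ← hKtop]; exact hj
        exact (h _ ⟨i, rfl, union_subset hi (fun y hy => absurd (hY hy) (notMem_empty y))⟩) hxi
      have := hdisj i j hi0 hil hj0 hjl hij
      exact absurd (show x ∈ K i ∩ K j from ⟨hxi, hxj⟩) (by rw [this]; exact notMem_empty x)
    · rintro (hX | hX) A ⟨k, rfl, hk⟩
      · exact hX _ ⟨k, rfl, subset_union_left.trans hk⟩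
      · exact hX _ ⟨k, rfl, subset_union_right.trans hk⟩
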